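/- Let G be a finite simple chordal graph that is P_8-free, IR an irredundant set of G, A ⊆ RN = V(G) \ IR, C an irredundant component of G, and H = G[C]. Let ≤ be a tree order on C whose comparability graph is H (i.e., ≤ has a least element, every down-set {y : y ≤ x} is a chain, and two distinct vertices of C are adjacent in H if and only if they are comparable in ≤). Let x_1, …, x_p be the elements of R(A) having an element of Priv_IR(A,·) in C, let X_j = Priv_IR(A, x_j) for each j, X = X_1 ∪ … ∪ X_p, Y = (N(A) ∩ C) \ X, Z = C \ (X ∪ Y), and let F be the set of maximal elements of Z with respect to ≤. Then: there exists D ⊆ C that dominates Z in H and dominates none of X_1, …, X_p if and only if for every x ∈ F there exists a maximal element t of (C, ≤) (a leaf) with x ≤ t and X_i ⊄ N_H[t] for every i ∈ {1, …, p}. -/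

import Mathlib

variable {V : Type*}

/-- The closed neighborhood `N[x]` of a vertex. -/
def cnbr (G : SimpleGraph V) (x : V) : Set V := insert x (G.neighborSet x)

/-- `N[X] = ⋃ x ∈ X, N[x]`. -/
def cnbrSet (G : SimpleGraph V) (X : Set V) : Set V := ⋃ x ∈ X, cnbr G x

/-- `N(X) = N[X] \ X`. -/
def onbrSet (G : SimpleGraph V) (X : Set V) : Set V := cnbrSet G X \ X

/-- `D` dominates `X` if `X ⊆ N[D]`. -/
def Dominates (G : SimpleGraph V) (D X : Set V) : Prop := X ⊆ cnbrSet G D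

/-- `D` is a minimal dominating set of `G`. -/
def IsMinDomSet (G : SimpleGraph V) (D : Set V) : Prop :=
  Dominates G D Set.univ ∧ ∀ D' : Set V, D' ⊂ D → ¬ Dominates G D' Set.univ

/-- `Priv(D, x)`: private neighbors of `x` w.r.t. `D`. -/
def priv (G : SimpleGraph V) (D : Set V) (x : V) : Set V := {u | cnbr G u ∩ D = {x}}

/-- `IR` is an irredundant set of `G`. -/
def IsIrredundantSet (G : SimpleGraph V) (IR : Set V) : Prop :=
  (∀ v : V, ∃ x ∈ IR, cnbr G x ⊆ cnbr G v) ∧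
  (∀ x ∈ IR, ∀ v : V, ¬ cnbr G v ⊂ cnbr G x) ∧
  (∀ x ∈ IR, ∀ y ∈ IR, x ≠ y → cnbr G x ≠ cnbr G y)

/-- `Priv_IR(D, x) = Priv(D, x) ∩ IR`. -/
def privIR (G : SimpleGraph V) (IR D : Set V) (x : V) : Set V := priv G D x ∩ IR

/-- `A ∈ D_RN(G)`: `A` is the intersection of a minimal dominating set with `RN = V \ IR`. -/
def memDRN (G : SimpleGraph V) (IR A : Set V) : Prop :=
  ∃ D : Set V, IsMinDomSet G D ∧ A = D ∩ IRᶜ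

/-- `G` is `P_k`-free: it has no induced path on `k` vertices. -/
def PkFree (G : SimpleGraph V) (k : ℕ) : Prop :=
  ¬ ∃ f : Fin k → V, Function.Injective f ∧
      ∀ i j : Fin k, G.Adj (f i) (f j) ↔ (i.val + 1 = j.val ∨ j.val + 1 = i.val)

/-- `G` is chordal: no induced cycle on `n ≥ 4` vertices. -/
def Chordal (G : SimpleGraph V) : Prop :=
  ∀ n : ℕ, 4 ≤ n → ¬ ∃ f : ZMod n → V, Function.Injective f ∧
      ∀ i j : ZMod n, G.Adj (f i) (f j) ↔ (i = j + 1 ∨ j = i + 1)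

/-- `C` is a connected component of the subgraph of `G` induced by `S`. -/
def IsCompOf (G : SimpleGraph V) (S C : Set V) : Prop :=
  C ⊆ S ∧ C.Nonempty ∧ (G.induce C).Connected ∧
    ∀ x ∈ C, ∀ y ∈ S, G.Adj x y → y ∈ C

/-- `B(A)`: the elements of `A` having an irredundant private neighbor in some irredundant
component entirely contained in `N(A)`. -/
def Bset (G : SimpleGraph V) (IR A : Set V) : Set V :=
  {a ∈ A | ∃ C : Set V, IsCompOf G IR C ∧ C ⊆ onbrSet G A ∧ (privIR G IR A a ∩ C).Nonempty}

/-- Domination inside the subgraph induced by `C`: every `u ∈ X` equals, or is adjacent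
(within `C`) to, some `d ∈ D`.  For `D, X ⊆ C` this is domination in `G[C]`. -/
def domIn (G : SimpleGraph V) (C D X : Set V) : Prop :=
  ∀ u ∈ X, ∃ d ∈ D, u = d ∨ (G.Adj d u ∧ d ∈ C ∧ u ∈ C)



set_option maxHeartbeats 1000000

lemma mem_cnbr (G : SimpleGraph V) (w z : V) : z ∈ cnbr G w ↔ z = w ∨ G.Adj w z := by
  simp [cnbr]

lemma cnbr_comm (G : SimpleGraph V) (w z : V) : z ∈ cnbr G w ↔ w ∈ cnbr G z := by
  simp [cnbr, eq_comm, G.adj_comm]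

lemma exists_max_rel [Fintype V] (C : Set V) (le : V → V → Prop)
    (hrefl : ∀ x ∈ C, le x x)
    (hanti : ∀ x ∈ C, ∀ y ∈ C, le x y → le y x → x = y)
    (htrans : ∀ x ∈ C, ∀ y ∈ C, ∀ z ∈ C, le x y → le y z → le x z)
    (P : Set V) (hPC : ∀ w ∈ P, w ∈ C) (hne : P.Nonempty) :
    ∃ t ∈ P, ∀ z ∈ P, le t z → z = t := by
  classical
  obtain ⟨t, htP, hmax⟩ := Set.exists_max_image P
    (fun z => ({w ∈ P | le w z}).ncard) (Set.toFinite P) hne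
  refine ⟨t, htP, ?_⟩
  intro z hzP hlt
  by_contra hne'
  have hsub : {w ∈ P | le w t} ⊂ {w ∈ P | le w z} := by
    constructor
    · intro w hw
      exact ⟨hw.1, htrans w (hPC w hw.1) t (hPC t htP) z (hPC z hzP) hw.2 hlt⟩
    · intro hsub'
      have hz1 : z ∈ {w ∈ P | le w z} := ⟨hzP, hrefl z (hPC z hzP)⟩
      have hz2 : z ∈ {w ∈ P | le w t} := hsub' hz1
      exact hne' (hanti z (hPC z hzP) t (hPC t htP) hz2.2 hlt)
  have := Set.ncard_lt_ncard hsub (Set.toFinite _)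
  exact absurd (hmax z hzP) (by omega)

lemma noC4 {V : Type*} (G : SimpleGraph V) (hch : Chordal G) (v0 v1 v2 v3 : V)
    (e01 : G.Adj v0 v1) (e12 : G.Adj v1 v2) (e23 : G.Adj v2 v3) (e30 : G.Adj v3 v0) (n02 : ¬ G.Adj v0 v2) (n13 : ¬ G.Adj v1 v3) (d02 : v0 ≠ v2) (d13 : v1 ≠ v3) : False := by
  classical
  apply hch 4 (by norm_num)
  have hk : ∀ k : ZMod 4, k = 0 ∨ k = 1 ∨ k = 2 ∨ k = 3 := by decide
  have e10 : G.Adj v1 v0 := e01.symm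
  have e21 : G.Adj v2 v1 := e12.symm
  have e32 : G.Adj v3 v2 := e23.symm
  have e03 : G.Adj v0 v3 := e30.symm
  have n20 : ¬ G.Adj v2 v0 := fun h => n02 h.symm
  have d20 : v2 ≠ v0 := d02.symm
  have n31 : ¬ G.Adj v3 v1 := fun h => n13 h.symm
  have d31 : v3 ≠ v1 := d13.symm
  have d01 : v0 ≠ v1 := e01.ne
  have d10 : v1 ≠ v0 := e01.ne'
  have d12 : v1 ≠ v2 := e12.ne
  have d21 : v2 ≠ v1 := e12.ne'
  have d23 : v2 ≠ v3 := e23.ne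
  have d32 : v3 ≠ v2 := e23.ne'
  have d30 : v3 ≠ v0 := e30.ne
  have d03 : v0 ≠ v3 := e30.ne'
  have l0 : ¬ G.Adj v0 v0 := G.loopless.irrefl v0
  have l1 : ¬ G.Adj v1 v1 := G.loopless.irrefl v1
  have l2 : ¬ G.Adj v2 v2 := G.loopless.irrefl v2
  have l3 : ¬ G.Adj v3 v3 := G.loopless.irrefl v3
  refine ⟨fun i => if i = 0 then v0 else if i = 1 then v1 else if i = 2 then v2 else v3, ?_, ?_⟩
  · intro i j h
    rcases hk i with rfl|rfl|rfl|rfl <;> rcases hk j with rfl|rfl|rfl|rfl <;>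
      simp (config := { decide := true }) only [if_true, if_false] at h ⊢ <;> first | rfl | exact absurd h (by assumption)
  · intro i j
    rcases hk i with rfl|rfl|rfl|rfl <;> rcases hk j with rfl|rfl|rfl|rfl <;>
      simp (config := { decide := true }) only [if_true, if_false] <;> first | (exact iff_of_true (by assumption) (by decide)) | (exact iff_of_false (by assumption) (by decide))

lemma noC5 {V : Type*} (G : SimpleGraph V) (hch : Chordal G) (v0 v1 v2 v3 v4 : V)
    (e01 : G.Adj v0 v1) (e12 : G.Adj v1 v2) (e23 : G.Adj v2 v3) (e34 : G.Adj v3 v4) (e40 : G.Adj v4 v0) (n02 : ¬ G.Adj v0 v2) (n03 : ¬ G.Adj v0 v3) (n13 : ¬ G.Adj v1 v3) (n14 : ¬ G.Adj v1 v4) (n24 : ¬ G.Adj v2 v4) (d02 : v0 ≠ v2) (d03 : v0 ≠ v3) (d13 : v1 ≠ v3) (d14 : v1 ≠ v4) (d24 : v2 ≠ v4) : False := by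
  classical
  apply hch 5 (by norm_num)
  have hk : ∀ k : ZMod 5, k = 0 ∨ k = 1 ∨ k = 2 ∨ k = 3 ∨ k = 4 := by decide
  have e10 : G.Adj v1 v0 := e01.symm
  have e21 : G.Adj v2 v1 := e12.symm
  have e32 : G.Adj v3 v2 := e23.symm
  have e43 : G.Adj v4 v3 := e34.symm
  have e04 : G.Adj v0 v4 := e40.symm
  have n20 : ¬ G.Adj v2 v0 := fun h => n02 h.symm
  have d20 : v2 ≠ v0 := d02.symm
  have n30 : ¬ G.Adj v3 v0 := fun h => n03 h.symm
  have d30 : v3 ≠ v0 := d03.symm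
  have n31 : ¬ G.Adj v3 v1 := fun h => n13 h.symm
  have d31 : v3 ≠ v1 := d13.symm
  have n41 : ¬ G.Adj v4 v1 := fun h => n14 h.symm
  have d41 : v4 ≠ v1 := d14.symm
  have n42 : ¬ G.Adj v4 v2 := fun h => n24 h.symm
  have d42 : v4 ≠ v2 := d24.symm
  have d01 : v0 ≠ v1 := e01.ne
  have d10 : v1 ≠ v0 := e01.ne'
  have d12 : v1 ≠ v2 := e12.ne
  have d21 : v2 ≠ v1 := e12.ne'
  have d23 : v2 ≠ v3 := e23.ne
  have d32 : v3 ≠ v2 := e23.ne'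
  have d34 : v3 ≠ v4 := e34.ne
  have d43 : v4 ≠ v3 := e34.ne'
  have d40 : v4 ≠ v0 := e40.ne
  have d04 : v0 ≠ v4 := e40.ne'
  have l0 : ¬ G.Adj v0 v0 := G.loopless.irrefl v0
  have l1 : ¬ G.Adj v1 v1 := G.loopless.irrefl v1
  have l2 : ¬ G.Adj v2 v2 := G.loopless.irrefl v2
  have l3 : ¬ G.Adj v3 v3 := G.loopless.irrefl v3
  have l4 : ¬ G.Adj v4 v4 := G.loopless.irrefl v4
  refine ⟨fun i => if i = 0 then v0 else if i = 1 then v1 else if i = 2 then v2 else if i = 3 then v3 else v4, ?_, ?_⟩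
  · intro i j h
    rcases hk i with rfl|rfl|rfl|rfl|rfl <;> rcases hk j with rfl|rfl|rfl|rfl|rfl <;>
      simp (config := { decide := true }) only [if_true, if_false] at h ⊢ <;> first | rfl | exact absurd h (by assumption)
  · intro i j
    rcases hk i with rfl|rfl|rfl|rfl|rfl <;> rcases hk j with rfl|rfl|rfl|rfl|rfl <;>
      simp (config := { decide := true }) only [if_true, if_false] <;> first | (exact iff_of_true (by assumption) (by decide)) | (exact iff_of_false (by assumption) (by decide))

lemma noC6 {V : Type*} (G : SimpleGraph V) (hch : Chordal G) (v0 v1 v2 v3 v4 v5 : V)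
    (e01 : G.Adj v0 v1) (e12 : G.Adj v1 v2) (e23 : G.Adj v2 v3) (e34 : G.Adj v3 v4) (e45 : G.Adj v4 v5) (e50 : G.Adj v5 v0) (n02 : ¬ G.Adj v0 v2) (n03 : ¬ G.Adj v0 v3) (n04 : ¬ G.Adj v0 v4) (n13 : ¬ G.Adj v1 v3) (n14 : ¬ G.Adj v1 v4) (n15 : ¬ G.Adj v1 v5) (n24 : ¬ G.Adj v2 v4) (n25 : ¬ G.Adj v2 v5) (n35 : ¬ G.Adj v3 v5) (d02 : v0 ≠ v2) (d03 : v0 ≠ v3) (d04 : v0 ≠ v4) (d13 : v1 ≠ v3) (d14 : v1 ≠ v4) (d15 : v1 ≠ v5) (d24 : v2 ≠ v4) (d25 : v2 ≠ v5) (d35 : v3 ≠ v5) : False := by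
  classical
  apply hch 6 (by norm_num)
  have hk : ∀ k : ZMod 6, k = 0 ∨ k = 1 ∨ k = 2 ∨ k = 3 ∨ k = 4 ∨ k = 5 := by decide
  have e10 : G.Adj v1 v0 := e01.symm
  have e21 : G.Adj v2 v1 := e12.symm
  have e32 : G.Adj v3 v2 := e23.symm
  have e43 : G.Adj v4 v3 := e34.symm
  have e54 : G.Adj v5 v4 := e45.symm
  have e05 : G.Adj v0 v5 := e50.symm
  have n20 : ¬ G.Adj v2 v0 := fun h => n02 h.symm
  have d20 : v2 ≠ v0 := d02.symm
  have n30 : ¬ G.Adj v3 v0 := fun h => n03 h.symm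
  have d30 : v3 ≠ v0 := d03.symm
  have n40 : ¬ G.Adj v4 v0 := fun h => n04 h.symm
  have d40 : v4 ≠ v0 := d04.symm
  have n31 : ¬ G.Adj v3 v1 := fun h => n13 h.symm
  have d31 : v3 ≠ v1 := d13.symm
  have n41 : ¬ G.Adj v4 v1 := fun h => n14 h.symm
  have d41 : v4 ≠ v1 := d14.symm
  have n51 : ¬ G.Adj v5 v1 := fun h => n15 h.symm
  have d51 : v5 ≠ v1 := d15.symm
  have n42 : ¬ G.Adj v4 v2 := fun h => n24 h.symm
  have d42 : v4 ≠ v2 := d24.symm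
  have n52 : ¬ G.Adj v5 v2 := fun h => n25 h.symm
  have d52 : v5 ≠ v2 := d25.symm
  have n53 : ¬ G.Adj v5 v3 := fun h => n35 h.symm
  have d53 : v5 ≠ v3 := d35.symm
  have d01 : v0 ≠ v1 := e01.ne
  have d10 : v1 ≠ v0 := e01.ne'
  have d12 : v1 ≠ v2 := e12.ne
  have d21 : v2 ≠ v1 := e12.ne'
  have d23 : v2 ≠ v3 := e23.ne
  have d32 : v3 ≠ v2 := e23.ne'
  have d34 : v3 ≠ v4 := e34.ne
  have d43 : v4 ≠ v3 := e34.ne'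
  have d45 : v4 ≠ v5 := e45.ne
  have d54 : v5 ≠ v4 := e45.ne'
  have d50 : v5 ≠ v0 := e50.ne
  have d05 : v0 ≠ v5 := e50.ne'
  have l0 : ¬ G.Adj v0 v0 := G.loopless.irrefl v0
  have l1 : ¬ G.Adj v1 v1 := G.loopless.irrefl v1
  have l2 : ¬ G.Adj v2 v2 := G.loopless.irrefl v2
  have l3 : ¬ G.Adj v3 v3 := G.loopless.irrefl v3
  have l4 : ¬ G.Adj v4 v4 := G.loopless.irrefl v4
  have l5 : ¬ G.Adj v5 v5 := G.loopless.irrefl v5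
  refine ⟨fun i => if i = 0 then v0 else if i = 1 then v1 else if i = 2 then v2 else if i = 3 then v3 else if i = 4 then v4 else v5, ?_, ?_⟩
  · intro i j h
    rcases hk i with rfl|rfl|rfl|rfl|rfl|rfl <;> rcases hk j with rfl|rfl|rfl|rfl|rfl|rfl <;>
      simp (config := { decide := true }) only [if_true, if_false] at h ⊢ <;> first | rfl | exact absurd h (by assumption)
  · intro i j
    rcases hk i with rfl|rfl|rfl|rfl|rfl|rfl <;> rcases hk j with rfl|rfl|rfl|rfl|rfl|rfl <;>
      simp (config := { decide := true }) only [if_true, if_false] <;> first | (exact iff_of_true (by assumption) (by decide)) | (exact iff_of_false (by assumption) (by decide))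

lemma noC7 {V : Type*} (G : SimpleGraph V) (hch : Chordal G) (v0 v1 v2 v3 v4 v5 v6 : V)
    (e01 : G.Adj v0 v1) (e12 : G.Adj v1 v2) (e23 : G.Adj v2 v3) (e34 : G.Adj v3 v4) (e45 : G.Adj v4 v5) (e56 : G.Adj v5 v6) (e60 : G.Adj v6 v0) (n02 : ¬ G.Adj v0 v2) (n03 : ¬ G.Adj v0 v3) (n04 : ¬ G.Adj v0 v4) (n05 : ¬ G.Adj v0 v5) (n13 : ¬ G.Adj v1 v3) (n14 : ¬ G.Adj v1 v4) (n15 : ¬ G.Adj v1 v5) (n16 : ¬ G.Adj v1 v6) (n24 : ¬ G.Adj v2 v4) (n25 : ¬ G.Adj v2 v5) (n26 : ¬ G.Adj v2 v6) (n35 : ¬ G.Adj v3 v5) (n36 : ¬ G.Adj v3 v6) (n46 : ¬ G.Adj v4 v6) (d02 : v0 ≠ v2) (d03 : v0 ≠ v3) (d04 : v0 ≠ v4) (d05 : v0 ≠ v5) (d13 : v1 ≠ v3) (d14 : v1 ≠ v4) (d15 : v1 ≠ v5) (d16 : v1 ≠ v6) (d24 : v2 ≠ v4) (d25 : v2 ≠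 v5) (d26 : v2 ≠ v6) (d35 : v3 ≠ v5) (d36 : v3 ≠ v6) (d46 : v4 ≠ v6) : False := by
  classical
  apply hch 7 (by norm_num)
  have hk : ∀ k : ZMod 7, k = 0 ∨ k = 1 ∨ k = 2 ∨ k = 3 ∨ k = 4 ∨ k = 5 ∨ k = 6 := by decide
  have e10 : G.Adj v1 v0 := e01.symm
  have e21 : G.Adj v2 v1 := e12.symm
  have e32 : G.Adj v3 v2 := e23.symm
  have e43 : G.Adj v4 v3 := e34.symm
  have e54 : G.Adj v5 v4 := e45.symm
  have e65 : G.Adj v6 v5 := e56.symm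
  have e06 : G.Adj v0 v6 := e60.symm
  have n20 : ¬ G.Adj v2 v0 := fun h => n02 h.symm
  have d20 : v2 ≠ v0 := d02.symm
  have n30 : ¬ G.Adj v3 v0 := fun h => n03 h.symm
  have d30 : v3 ≠ v0 := d03.symm
  have n40 : ¬ G.Adj v4 v0 := fun h => n04 h.symm
  have d40 : v4 ≠ v0 := d04.symm
  have n50 : ¬ G.Adj v5 v0 := fun h => n05 h.symm
  have d50 : v5 ≠ v0 := d05.symm
  have n31 : ¬ G.Adj v3 v1 := fun h => n13 h.symm
  have d31 : v3 ≠ v1 := d13.symm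
  have n41 : ¬ G.Adj v4 v1 := fun h => n14 h.symm
  have d41 : v4 ≠ v1 := d14.symm
  have n51 : ¬ G.Adj v5 v1 := fun h => n15 h.symm
  have d51 : v5 ≠ v1 := d15.symm
  have n61 : ¬ G.Adj v6 v1 := fun h => n16 h.symm
  have d61 : v6 ≠ v1 := d16.symm
  have n42 : ¬ G.Adj v4 v2 := fun h => n24 h.symm
  have d42 : v4 ≠ v2 := d24.symm
  have n52 : ¬ G.Adj v5 v2 := fun h => n25 h.symm
  have d52 : v5 ≠ v2 := d25.symm
  have n62 : ¬ G.Adj v6 v2 := fun h => n26 h.symm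
  have d62 : v6 ≠ v2 := d26.symm
  have n53 : ¬ G.Adj v5 v3 := fun h => n35 h.symm
  have d53 : v5 ≠ v3 := d35.symm
  have n63 : ¬ G.Adj v6 v3 := fun h => n36 h.symm
  have d63 : v6 ≠ v3 := d36.symm
  have n64 : ¬ G.Adj v6 v4 := fun h => n46 h.symm
  have d64 : v6 ≠ v4 := d46.symm
  have d01 : v0 ≠ v1 := e01.ne
  have d10 : v1 ≠ v0 := e01.ne'
  have d12 : v1 ≠ v2 := e12.ne
  have d21 : v2 ≠ v1 := e12.ne'
  have d23 : v2 ≠ v3 := e23.ne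
  have d32 : v3 ≠ v2 := e23.ne'
  have d34 : v3 ≠ v4 := e34.ne
  have d43 : v4 ≠ v3 := e34.ne'
  have d45 : v4 ≠ v5 := e45.ne
  have d54 : v5 ≠ v4 := e45.ne'
  have d56 : v5 ≠ v6 := e56.ne
  have d65 : v6 ≠ v5 := e56.ne'
  have d60 : v6 ≠ v0 := e60.ne
  have d06 : v0 ≠ v6 := e60.ne'
  have l0 : ¬ G.Adj v0 v0 := G.loopless.irrefl v0
  have l1 : ¬ G.Adj v1 v1 := G.loopless.irrefl v1
  have l2 : ¬ G.Adj v2 v2 := G.loopless.irrefl v2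
  have l3 : ¬ G.Adj v3 v3 := G.loopless.irrefl v3
  have l4 : ¬ G.Adj v4 v4 := G.loopless.irrefl v4
  have l5 : ¬ G.Adj v5 v5 := G.loopless.irrefl v5
  have l6 : ¬ G.Adj v6 v6 := G.loopless.irrefl v6
  refine ⟨fun i => if i = 0 then v0 else if i = 1 then v1 else if i = 2 then v2 else if i = 3 then v3 else if i = 4 then v4 else if i = 5 then v5 else v6, ?_, ?_⟩
  · intro i j h
    rcases hk i with rfl|rfl|rfl|rfl|rfl|rfl|rfl <;> rcases hk j with rfl|rfl|rfl|rfl|rfl|rfl|rfl <;>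
      simp (config := { decide := true }) only [if_true, if_false] at h ⊢ <;> first | rfl | exact absurd h (by assumption)
  · intro i j
    rcases hk i with rfl|rfl|rfl|rfl|rfl|rfl|rfl <;> rcases hk j with rfl|rfl|rfl|rfl|rfl|rfl|rfl <;>
      simp (config := { decide := true }) only [if_true, if_false] <;> first | (exact iff_of_true (by assumption) (by decide)) | (exact iff_of_false (by assumption) (by decide))

lemma noC8 {V : Type*} (G : SimpleGraph V) (hch : Chordal G) (v0 v1 v2 v3 v4 v5 v6 v7 : V)
    (e01 : G.Adj v0 v1) (e12 : G.Adj v1 v2) (e23 : G.Adj v2 v3) (e34 : G.Adj v3 v4) (e45 : G.Adj v4 v5) (e56 : G.Adj v5 v6) (e67 : G.Adj v6 v7) (e70 : G.Adj v7 v0) (n02 : ¬ G.Adj v0 v2) (n03 : ¬ G.Adj v0 v3) (n04 : ¬ G.Adj v0 v4) (n05 : ¬ G.Adj v0 v5) (n06 : ¬ G.Adj v0 v6) (n13 : ¬ G.Adj v1 v3) (n14 : ¬ G.Adj v1 v4) (n15 : ¬ G.Adj v1 v5) (n16 : ¬ G.Adj v1 v6) (n17 : ¬ G.Adj v1 v7)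 (n24 : ¬ G.Adj v2 v4) (n25 : ¬ G.Adj v2 v5) (n26 : ¬ G.Adj v2 v6) (n27 : ¬ G.Adj v2 v7) (n35 : ¬ G.Adj v3 v5) (n36 : ¬ G.Adj v3 v6) (n37 : ¬ G.Adj v3 v7) (n46 : ¬ G.Adj v4 v6) (n47 : ¬ G.Adj v4 v7) (n57 : ¬ G.Adj v5 v7) (d02 : v0 ≠ v2) (d03 : v0 ≠ v3) (d04 : v0 ≠ v4) (d05 : v0 ≠ v5) (d06 : v0 ≠ v6) (d13 : v1 ≠ v3) (d14 : v1 ≠ v4) (d15 : v1 ≠ v5) (d16 : v1 ≠ v6) (d17 : v1 ≠ v7) (d24 : v2 ≠ v4) (d25 : v2 ≠ v5) (d26 : v2 ≠ v6) (d27 : v2 ≠ v7) (d35 : v3 ≠ v5) (d36 : v3 ≠ v6) (d37 : v3 ≠ v7) (d46 : v4 ≠ v6) (d47 : v4 ≠ v7) (d57 : v5 ≠ v7) : False := by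
  classical
  apply hch 8 (by norm_num)
  have hk : ∀ k : ZMod 8, k = 0 ∨ k = 1 ∨ k = 2 ∨ k = 3 ∨ k = 4 ∨ k = 5 ∨ k = 6 ∨ k = 7 := by decide
  have e10 : G.Adj v1 v0 := e01.symm
  have e21 : G.Adj v2 v1 := e12.symm
  have e32 : G.Adj v3 v2 := e23.symm
  have e43 : G.Adj v4 v3 := e34.symm
  have e54 : G.Adj v5 v4 := e45.symm
  have e65 : G.Adj v6 v5 := e56.symm
  have e76 : G.Adj v7 v6 := e67.symm
  have e07 : G.Adj v0 v7 := e70.symm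
  have n20 : ¬ G.Adj v2 v0 := fun h => n02 h.symm
  have d20 : v2 ≠ v0 := d02.symm
  have n30 : ¬ G.Adj v3 v0 := fun h => n03 h.symm
  have d30 : v3 ≠ v0 := d03.symm
  have n40 : ¬ G.Adj v4 v0 := fun h => n04 h.symm
  have d40 : v4 ≠ v0 := d04.symm
  have n50 : ¬ G.Adj v5 v0 := fun h => n05 h.symm
  have d50 : v5 ≠ v0 := d05.symm
  have n60 : ¬ G.Adj v6 v0 := fun h => n06 h.symm
  have d60 : v6 ≠ v0 := d06.symm
  have n31 : ¬ G.Adj v3 v1 := fun h => n13 h.symm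
  have d31 : v3 ≠ v1 := d13.symm
  have n41 : ¬ G.Adj v4 v1 := fun h => n14 h.symm
  have d41 : v4 ≠ v1 := d14.symm
  have n51 : ¬ G.Adj v5 v1 := fun h => n15 h.symm
  have d51 : v5 ≠ v1 := d15.symm
  have n61 : ¬ G.Adj v6 v1 := fun h => n16 h.symm
  have d61 : v6 ≠ v1 := d16.symm
  have n71 : ¬ G.Adj v7 v1 := fun h => n17 h.symm
  have d71 : v7 ≠ v1 := d17.symm
  have n42 : ¬ G.Adj v4 v2 := fun h => n24 h.symm
  have d42 : v4 ≠ v2 := d24.symm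
  have n52 : ¬ G.Adj v5 v2 := fun h => n25 h.symm
  have d52 : v5 ≠ v2 := d25.symm
  have n62 : ¬ G.Adj v6 v2 := fun h => n26 h.symm
  have d62 : v6 ≠ v2 := d26.symm
  have n72 : ¬ G.Adj v7 v2 := fun h => n27 h.symm
  have d72 : v7 ≠ v2 := d27.symm
  have n53 : ¬ G.Adj v5 v3 := fun h => n35 h.symm
  have d53 : v5 ≠ v3 := d35.symm
  have n63 : ¬ G.Adj v6 v3 := fun h => n36 h.symm
  have d63 : v6 ≠ v3 := d36.symm
  have n73 : ¬ G.Adj v7 v3 := fun h => n37 h.symm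
  have d73 : v7 ≠ v3 := d37.symm
  have n64 : ¬ G.Adj v6 v4 := fun h => n46 h.symm
  have d64 : v6 ≠ v4 := d46.symm
  have n74 : ¬ G.Adj v7 v4 := fun h => n47 h.symm
  have d74 : v7 ≠ v4 := d47.symm
  have n75 : ¬ G.Adj v7 v5 := fun h => n57 h.symm
  have d75 : v7 ≠ v5 := d57.symm
  have d01 : v0 ≠ v1 := e01.ne
  have d10 : v1 ≠ v0 := e01.ne'
  have d12 : v1 ≠ v2 := e12.ne
  have d21 : v2 ≠ v1 := e12.ne'
  have d23 : v2 ≠ v3 := e23.ne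
  have d32 : v3 ≠ v2 := e23.ne'
  have d34 : v3 ≠ v4 := e34.ne
  have d43 : v4 ≠ v3 := e34.ne'
  have d45 : v4 ≠ v5 := e45.ne
  have d54 : v5 ≠ v4 := e45.ne'
  have d56 : v5 ≠ v6 := e56.ne
  have d65 : v6 ≠ v5 := e56.ne'
  have d67 : v6 ≠ v7 := e67.ne
  have d76 : v7 ≠ v6 := e67.ne'
  have d70 : v7 ≠ v0 := e70.ne
  have d07 : v0 ≠ v7 := e70.ne'
  have l0 : ¬ G.Adj v0 v0 := G.loopless.irrefl v0
  have l1 : ¬ G.Adj v1 v1 := G.loopless.irrefl v1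
  have l2 : ¬ G.Adj v2 v2 := G.loopless.irrefl v2
  have l3 : ¬ G.Adj v3 v3 := G.loopless.irrefl v3
  have l4 : ¬ G.Adj v4 v4 := G.loopless.irrefl v4
  have l5 : ¬ G.Adj v5 v5 := G.loopless.irrefl v5
  have l6 : ¬ G.Adj v6 v6 := G.loopless.irrefl v6
  have l7 : ¬ G.Adj v7 v7 := G.loopless.irrefl v7
  refine ⟨fun i => if i = 0 then v0 else if i = 1 then v1 else if i = 2 then v2 else if i = 3 then v3 else if i = 4 then v4 else if i = 5 then v5 else if i = 6 then v6 else v7, ?_, ?_⟩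
  · intro i j h
    rcases hk i with rfl|rfl|rfl|rfl|rfl|rfl|rfl|rfl <;> rcases hk j with rfl|rfl|rfl|rfl|rfl|rfl|rfl|rfl <;>
      simp (config := { decide := true }) only [if_true, if_false] at h ⊢ <;> first | rfl | exact absurd h (by assumption)
  · intro i j
    rcases hk i with rfl|rfl|rfl|rfl|rfl|rfl|rfl|rfl <;> rcases hk j with rfl|rfl|rfl|rfl|rfl|rfl|rfl|rfl <;>
      simp (config := { decide := true }) only [if_true, if_false] <;> first | (exact iff_of_true (by assumption) (by decide)) | (exact iff_of_false (by assumption) (by decide))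

lemma noP8' {V : Type*} (G : SimpleGraph V) (hP8 : PkFree G 8) (v0 v1 v2 v3 v4 v5 v6 v7 : V)
    (e01 : G.Adj v0 v1) (e12 : G.Adj v1 v2) (e23 : G.Adj v2 v3) (e34 : G.Adj v3 v4) (e45 : G.Adj v4 v5) (e56 : G.Adj v5 v6) (e67 : G.Adj v6 v7) (n02 : ¬ G.Adj v0 v2) (n03 : ¬ G.Adj v0 v3) (n04 : ¬ G.Adj v0 v4) (n05 : ¬ G.Adj v0 v5) (n06 : ¬ G.Adj v0 v6) (n07 : ¬ G.Adj v0 v7) (n13 : ¬ G.Adj v1 v3) (n14 : ¬ G.Adj v1 v4) (n15 : ¬ G.Adj v1 v5) (n16 : ¬ G.Adj v1 v6) (n17 : ¬ G.Adj v1 v7) (n24 : ¬ G.Adj v2 v4) (n25 : ¬ G.Adj v2 v5) (n26 : ¬ G.Adj v2 v6) (n27 : ¬ G.Adj v2 v7) (n35 : ¬ G.Adj v3 v5) (n36 : ¬ G.Adj v3 v6) (n37 : ¬ G.Adj v3 v7) (n46 : ¬ G.Adj v4 v6) (n47 : ¬ G.Adj v4 v7) (n57 : ¬ G.Adj v5 v7)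 (d02 : v0 ≠ v2) (d03 : v0 ≠ v3) (d04 : v0 ≠ v4) (d05 : v0 ≠ v5) (d06 : v0 ≠ v6) (d07 : v0 ≠ v7) (d13 : v1 ≠ v3) (d14 : v1 ≠ v4) (d15 : v1 ≠ v5) (d16 : v1 ≠ v6) (d17 : v1 ≠ v7) (d24 : v2 ≠ v4) (d25 : v2 ≠ v5) (d26 : v2 ≠ v6) (d27 : v2 ≠ v7) (d35 : v3 ≠ v5) (d36 : v3 ≠ v6) (d37 : v3 ≠ v7) (d46 : v4 ≠ v6) (d47 : v4 ≠ v7) (d57 : v5 ≠ v7) : False := by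
  classical
  apply hP8
  have hk : ∀ k : Fin 8, k = 0 ∨ k = 1 ∨ k = 2 ∨ k = 3 ∨ k = 4 ∨ k = 5 ∨ k = 6 ∨ k = 7 := by decide
  have e10 : G.Adj v1 v0 := e01.symm
  have e21 : G.Adj v2 v1 := e12.symm
  have e32 : G.Adj v3 v2 := e23.symm
  have e43 : G.Adj v4 v3 := e34.symm
  have e54 : G.Adj v5 v4 := e45.symm
  have e65 : G.Adj v6 v5 := e56.symm
  have e76 : G.Adj v7 v6 := e67.symm
  have n20 : ¬ G.Adj v2 v0 := fun h => n02 h.symm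
  have d20 : v2 ≠ v0 := d02.symm
  have n30 : ¬ G.Adj v3 v0 := fun h => n03 h.symm
  have d30 : v3 ≠ v0 := d03.symm
  have n40 : ¬ G.Adj v4 v0 := fun h => n04 h.symm
  have d40 : v4 ≠ v0 := d04.symm
  have n50 : ¬ G.Adj v5 v0 := fun h => n05 h.symm
  have d50 : v5 ≠ v0 := d05.symm
  have n60 : ¬ G.Adj v6 v0 := fun h => n06 h.symm
  have d60 : v6 ≠ v0 := d06.symm
  have n70 : ¬ G.Adj v7 v0 := fun h => n07 h.symm
  have d70 : v7 ≠ v0 := d07.symm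
  have n31 : ¬ G.Adj v3 v1 := fun h => n13 h.symm
  have d31 : v3 ≠ v1 := d13.symm
  have n41 : ¬ G.Adj v4 v1 := fun h => n14 h.symm
  have d41 : v4 ≠ v1 := d14.symm
  have n51 : ¬ G.Adj v5 v1 := fun h => n15 h.symm
  have d51 : v5 ≠ v1 := d15.symm
  have n61 : ¬ G.Adj v6 v1 := fun h => n16 h.symm
  have d61 : v6 ≠ v1 := d16.symm
  have n71 : ¬ G.Adj v7 v1 := fun h => n17 h.symm
  have d71 : v7 ≠ v1 := d17.symm
  have n42 : ¬ G.Adj v4 v2 := fun h => n24 h.symm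
  have d42 : v4 ≠ v2 := d24.symm
  have n52 : ¬ G.Adj v5 v2 := fun h => n25 h.symm
  have d52 : v5 ≠ v2 := d25.symm
  have n62 : ¬ G.Adj v6 v2 := fun h => n26 h.symm
  have d62 : v6 ≠ v2 := d26.symm
  have n72 : ¬ G.Adj v7 v2 := fun h => n27 h.symm
  have d72 : v7 ≠ v2 := d27.symm
  have n53 : ¬ G.Adj v5 v3 := fun h => n35 h.symm
  have d53 : v5 ≠ v3 := d35.symm
  have n63 : ¬ G.Adj v6 v3 := fun h => n36 h.symm
  have d63 : v6 ≠ v3 := d36.symm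
  have n73 : ¬ G.Adj v7 v3 := fun h => n37 h.symm
  have d73 : v7 ≠ v3 := d37.symm
  have n64 : ¬ G.Adj v6 v4 := fun h => n46 h.symm
  have d64 : v6 ≠ v4 := d46.symm
  have n74 : ¬ G.Adj v7 v4 := fun h => n47 h.symm
  have d74 : v7 ≠ v4 := d47.symm
  have n75 : ¬ G.Adj v7 v5 := fun h => n57 h.symm
  have d75 : v7 ≠ v5 := d57.symm
  have d01 : v0 ≠ v1 := e01.ne
  have d10 : v1 ≠ v0 := e01.ne'
  have d12 : v1 ≠ v2 := e12.ne
  have d21 : v2 ≠ v1 := e12.ne'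
  have d23 : v2 ≠ v3 := e23.ne
  have d32 : v3 ≠ v2 := e23.ne'
  have d34 : v3 ≠ v4 := e34.ne
  have d43 : v4 ≠ v3 := e34.ne'
  have d45 : v4 ≠ v5 := e45.ne
  have d54 : v5 ≠ v4 := e45.ne'
  have d56 : v5 ≠ v6 := e56.ne
  have d65 : v6 ≠ v5 := e56.ne'
  have d67 : v6 ≠ v7 := e67.ne
  have d76 : v7 ≠ v6 := e67.ne'
  have l0 : ¬ G.Adj v0 v0 := G.loopless.irrefl v0
  have l1 : ¬ G.Adj v1 v1 := G.loopless.irrefl v1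
  have l2 : ¬ G.Adj v2 v2 := G.loopless.irrefl v2
  have l3 : ¬ G.Adj v3 v3 := G.loopless.irrefl v3
  have l4 : ¬ G.Adj v4 v4 := G.loopless.irrefl v4
  have l5 : ¬ G.Adj v5 v5 := G.loopless.irrefl v5
  have l6 : ¬ G.Adj v6 v6 := G.loopless.irrefl v6
  have l7 : ¬ G.Adj v7 v7 := G.loopless.irrefl v7
  refine ⟨fun i => if i = 0 then v0 else if i = 1 then v1 else if i = 2 then v2 else if i = 3 then v3 else if i = 4 then v4 else if i = 5 then v5 else if i = 6 then v6 else v7, ?_, ?_⟩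
  · intro i j h
    rcases hk i with rfl|rfl|rfl|rfl|rfl|rfl|rfl|rfl <;> rcases hk j with rfl|rfl|rfl|rfl|rfl|rfl|rfl|rfl <;>
      simp (config := { decide := true }) only [if_true, if_false] at h ⊢ <;> first | rfl | exact absurd h (by assumption)
  · intro i j
    rcases hk i with rfl|rfl|rfl|rfl|rfl|rfl|rfl|rfl <;> rcases hk j with rfl|rfl|rfl|rfl|rfl|rfl|rfl|rfl <;>
      simp (config := { decide := true }) only [if_true, if_false] <;> first | (exact iff_of_true (by assumption) (by decide)) | (exact iff_of_false (by assumption) (by decide))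

/-- In a `P₈`-free chordal graph with `C` an irredundant component whose
induced subgraph `H = G[C]` is the comparability graph of a tree order `le`, there exists
`D ⊆ C` dominating `Z` in `H` and dominating none of `X₁, …, X_p` iff every `x ∈ F` has a
leaf `t` above it with `Xᵢ ⊄ N_H[t]` for every `i`. -/
theorem stmt_14 [Fintype V] (G : SimpleGraph V) (hch : Chordal G) (hP8 : PkFree G 8)
    (IR : Set V) (hIR : IsIrredundantSet G IR)
    (A : Set V) (hA : A ⊆ IRᶜ)
    (C : Set V) (hC : IsCompOf G IR C)
    (le : V → V → Prop)
    (hrefl : ∀ x ∈ C, le x x)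
    (hanti : ∀ x ∈ C, ∀ y ∈ C, le x y → le y x → x = y)
    (htrans : ∀ x ∈ C, ∀ y ∈ C, ∀ z ∈ C, le x y → le y z → le x z)
    (hbot : ∃ r ∈ C, ∀ x ∈ C, le r x)
    (hchain : ∀ x ∈ C, ∀ y ∈ C, ∀ z ∈ C, le y x → le z x → (le y z ∨ le z y))
    (hcompat : ∀ x ∈ C, ∀ y ∈ C, (G.Adj x y ↔ x ≠ y ∧ (le x y ∨ le y x)))
    (p : ℕ) (xs : Fin p → V) (hxsinj : Function.Injective xs)
    (hxsmem : ∀ j, xs j ∈ A \ Bset G IR A ∧ (privIR G IR A (xs j) ∩ C).Nonempty)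
    (hxsall : ∀ a ∈ A \ Bset G IR A, (privIR G IR A a ∩ C).Nonempty → ∃ j, xs j = a)
    (X Y Z F : Set V)
    (hX : X = ⋃ j : Fin p, privIR G IR A (xs j))
    (hY : Y = (onbrSet G A ∩ C) \ X)
    (hZ : Z = C \ (X ∪ Y))
    (hF : F = {x ∈ Z | ∀ y ∈ Z, le x y → y = x}) :
    (∃ D ⊆ C, domIn G C D Z ∧ ∀ j : Fin p, ¬ domIn G C D (privIR G IR A (xs j))) ↔
      (∀ x ∈ F, ∃ t ∈ C, (∀ y ∈ C, le t y → y = t) ∧ le x t ∧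
        ∀ j : Fin p,
          ¬ privIR G IR A (xs j) ⊆ {y | y ∈ C ∧ (y = t ∨ G.Adj t y)}) := by
  classical
  have hCIR : C ⊆ IR := hC.1
  have hclos : ∀ c ∈ C, ∀ w ∈ IR, G.Adj c w → w ∈ C := hC.2.2.2
  have hadj_of_le : ∀ {c d : V}, c ∈ C → d ∈ C → le c d → c ≠ d → G.Adj c d := by
    intro c d hc hd hle hne
    exact (hcompat c hc d hd).2 ⟨hne, Or.inl hle⟩
  have hcomp_of_adj : ∀ {c d : V}, c ∈ C → d ∈ C → G.Adj c d → (le c d ∨ le d c) := by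
    intro c d hc hd h
    exact ((hcompat c hc d hd).1 h).2
  have hZC : Z ⊆ C := by rw [hZ]; exact Set.diff_subset
  have hZA : ∀ z ∈ Z, ∀ b ∈ A, z ∉ cnbr G b := by
    intro z hz b hb hmem
    rw [hZ] at hz
    obtain ⟨hzC, hzXY⟩ := hz
    have hzA : z ∉ A := fun hzA => (hA hzA) (hCIR hzC)
    have hon : z ∈ onbrSet G A ∩ C := ⟨⟨Set.mem_biUnion hb hmem, hzA⟩, hzC⟩
    by_cases hX' : z ∈ X
    · exact hzXY (Or.inl hX')
    · exact hzXY (Or.inr (by rw [hY]; exact ⟨hon, hX'⟩))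
  have hFmem : ∀ f ∈ F, f ∈ Z ∧ ∀ y ∈ Z, le f y → y = f := by
    intro f hf; rw [hF] at hf; exact hf
  have hupmax : ∀ z ∈ Z, ∃ f, f ∈ F ∧ le z f := by
    intro z hz
    obtain ⟨t, htP, hmax⟩ := exists_max_rel C le hrefl hanti htrans {w | w ∈ Z ∧ le z w}
      (fun w hw => hZC hw.1) ⟨z, hz, hrefl z (hZC hz)⟩
    refine ⟨t, ?_, htP.2⟩
    rw [hF]
    exact ⟨htP.1, fun y hy hty =>
      hmax y ⟨hy, htrans z (hZC hz) t (hZC htP.1) y (hZC hy) htP.2 hty⟩ hty⟩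
  have hleaf : ∀ c ∈ C, ∃ t, t ∈ C ∧ le c t ∧ ∀ y ∈ C, le t y → y = t := by
    intro c hc
    obtain ⟨t, htP, hmax⟩ := exists_max_rel C le hrefl hanti htrans {w | w ∈ C ∧ le c w}
      (fun w hw => hw.1) ⟨c, hc, hrefl c hc⟩
    exact ⟨t, htP.1, htP.2, fun y hy hty =>
      hmax y ⟨hy, htrans c hc t htP.1 y hy htP.2 hty⟩ hty⟩
  constructor
  · -- forward direction
    rintro ⟨D, hDC, hdomZ, hnone⟩ x hxF
    obtain ⟨hxZ, hxmax⟩ := hFmem x hxF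
    have hxC := hZC hxZ
    obtain ⟨d, hdD, hdx⟩ := hdomZ x hxZ
    have hdC : d ∈ C := hDC hdD
    have hcomp : le x d ∨ le d x := by
      rcases hdx with h | ⟨hadj, -, -⟩
      · exact Or.inl (by rw [h]; exact hrefl d hdC)
      · exact (hcomp_of_adj hdC hxC hadj).symm.imp (fun h => h) (fun h => h)
    obtain ⟨m0, hm0C, hxm0, hdm0⟩ : ∃ m0, m0 ∈ C ∧ le x m0 ∧ le d m0 := by
      rcases hcomp with h | h
      · exact ⟨d, hdC, h, hrefl d hdC⟩
      · exact ⟨x, hxC, hrefl x hxC, h⟩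
    obtain ⟨t, htC, hm0t, htleaf⟩ := hleaf m0 hm0C
    have hxt : le x t := htrans x hxC m0 hm0C t htC hxm0 hm0t
    have hdt : le d t := htrans d hdC m0 hm0C t htC hdm0 hm0t
    refine ⟨t, htC, htleaf, hxt, ?_⟩
    intro j hsub
    apply hnone j
    intro s hsS
    obtain ⟨hsC, hs2⟩ := hsub hsS
    have hst : le s t := by
      rcases hs2 with h | hadj
      · exact h ▸ hrefl t htC
      · rcases hcomp_of_adj htC hsC hadj with h | h
        · have := htleaf s hsC h; exact this ▸ hrefl t htC
        · exact h
    rcases hchain t htC s hsC d hdC hst hdt with h | h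
    · by_cases hsd : s = d
      · exact ⟨d, hdD, Or.inl hsd⟩
      · exact ⟨d, hdD, Or.inr ⟨(hadj_of_le hsC hdC h hsd).symm, hdC, hsC⟩⟩
    · by_cases hsd : s = d
      · exact ⟨d, hdD, Or.inl hsd⟩
      · exact ⟨d, hdD, Or.inr ⟨hadj_of_le hdC hsC h (fun hh => hsd hh.symm), hdC, hsC⟩⟩
  · -- backward direction
    intro hRHS
    refine ⟨{t | t ∈ C ∧ (∀ y ∈ C, le t y → y = t) ∧ (∃ f, f ∈ F ∧ le f t) ∧
        ∀ j : Fin p, ¬ privIR G IR A (xs j) ⊆ {y | y ∈ C ∧ (y = t ∨ G.Adj t y)}},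
      fun t ht => ht.1, ?_, ?_⟩
    · -- dominates Z
      intro z hz
      obtain ⟨f, hfF, hzf⟩ := hupmax z hz
      obtain ⟨t, htC, htleaf, hft, hgood⟩ := hRHS f hfF
      have hzt : le z t := htrans z (hZC hz) f (hZC (hFmem f hfF).1) t htC hzf hft
      have htD : t ∈ {t | t ∈ C ∧ (∀ y ∈ C, le t y → y = t) ∧ (∃ f, f ∈ F ∧ le f t) ∧
          ∀ j : Fin p, ¬ privIR G IR A (xs j) ⊆ {y | y ∈ C ∧ (y = t ∨ G.Adj t y)}} :=
        ⟨htC, htleaf, ⟨f, hfF, hft⟩, hgood⟩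
      by_cases hzt' : z = t
      · exact ⟨t, htD, Or.inl hzt'⟩
      · exact ⟨t, htD, Or.inr ⟨(hadj_of_le (hZC hz) htC hzt hzt').symm, htC, hZC hz⟩⟩
    · -- dominates none of the X_j
      intro j hdom
      have haA : xs j ∈ A := (hxsmem j).1.1
      have haIR : xs j ∉ IR := hA haA
      have hSIR : ∀ s ∈ privIR G IR A (xs j), s ∈ IR := fun s hs => hs.2
      have hSpriv : ∀ s ∈ privIR G IR A (xs j), cnbr G s ∩ A = {xs j} := fun s hs => hs.1
      have hSadja : ∀ s ∈ privIR G IR A (xs j), G.Adj s (xs j) := by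
        intro s hs
        have hmem : xs j ∈ cnbr G s ∩ A := by rw [hSpriv s hs]; rfl
        rcases (mem_cnbr G s (xs j)).1 hmem.1 with h | h
        · exact absurd (h ▸ hSIR s hs) haIR
        · exact h
      have hSnotA : ∀ z ∈ Z, z ∉ cnbr G (xs j) := fun z hz => hZA z hz (xs j) haA
      -- covering facts
      have hcover : ∀ s ∈ privIR G IR A (xs j), ∃ t, t ∈ C ∧ (∀ y ∈ C, le t y → y = t) ∧
          (¬ privIR G IR A (xs j) ⊆ {y | y ∈ C ∧ (y = t ∨ G.Adj t y)}) ∧ le s t ∧ s ∈ C ∧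
          (∃ f, f ∈ F ∧ le f t) := by
        intro s hs
        obtain ⟨d, hdD, hds⟩ := hdom s hs
        obtain ⟨hdC, hdleaf, hdf, hdgood⟩ := hdD
        have hsC : s ∈ C := by rcases hds with h | ⟨-, -, h⟩; exacts [h ▸ hdC, h]
        have hsd : le s d := by
          rcases hds with h | ⟨hadj, -, -⟩
          · exact h ▸ hrefl s (h ▸ hdC)
          · rcases hcomp_of_adj hdC hsC hadj with h | h
            · have := hdleaf s hsC h; rw [this]; exact hrefl d hdC
            · exact h
        exact ⟨d, hdC, hdleaf, hdgood j, hsd, hsC, hdf⟩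
      have hSC : ∀ s ∈ privIR G IR A (xs j), s ∈ C := by
        intro s hs
        obtain ⟨t, -, -, -, -, hsC, -⟩ := hcover s hs
        exact hsC
      by_cases hchn : ∀ s ∈ privIR G IR A (xs j), ∀ s' ∈ privIR G IR A (xs j), le s s' ∨ le s' s
      · -- chain case
        obtain ⟨s0, hs0⟩ := (hxsmem j).2
        obtain ⟨smax, hsmaxS, hsmaxmax⟩ := exists_max_rel C le hrefl hanti htrans
          (privIR G IR A (xs j)) hSC ⟨s0, hs0.1⟩
        obtain ⟨t, htC, htleaf, htgood, hst, hsmC, -⟩ := hcover smax hsmaxS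
        apply htgood
        intro s hsS
        have hle : le s t := by
          rcases hchn s hsS smax hsmaxS with h | h
          · exact htrans s (hSC s hsS) smax hsmC t htC h hst
          · rw [hsmaxmax s hsS h]; exact hst
        refine ⟨hSC s hsS, ?_⟩
        by_cases h' : s = t
        · exact Or.inl h'
        · exact Or.inr (hadj_of_le (hSC s hsS) htC hle h').symm
      · -- non-chain case: derive an induced P8, contradiction
        push_neg at hchn
        obtain ⟨u, huS, v, hvS, hnuv, hnvu⟩ := hchn
        have huC := hSC u huS
        have hvC := hSC v hvS
        have hune : u ≠ v := fun h => hnuv (h ▸ hrefl u huC)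
        have nuv : ¬ G.Adj u v := by
          intro h; rcases hcomp_of_adj huC hvC h with h' | h'
          exacts [hnuv h', hnvu h']
        have hadj_ua : G.Adj u (xs j) := hSadja u huS
        have hadj_va : G.Adj v (xs j) := hSadja v hvS
        obtain ⟨t1, ht1C, ht1leaf, ht1good, hut1, -, x, hxF, hxt1⟩ := hcover u huS
        obtain ⟨t2, ht2C, ht2leaf, ht2good, hvt2, -, y, hyF, hyt2⟩ := hcover v hvS
        obtain ⟨hxZ, hxmax⟩ := hFmem x hxF
        obtain ⟨hyZ, hymax⟩ := hFmem y hyF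
        have hxC := hZC hxZ
        have hyC := hZC hyZ
        have hxcn : x ∉ cnbr G (xs j) := hSnotA x hxZ
        have hycn : y ∉ cnbr G (xs j) := hSnotA y hyZ
        have nxa : ¬ G.Adj x (xs j) := fun h => hxcn ((mem_cnbr G (xs j) x).2 (Or.inr h.symm))
        have dxa : x ≠ (xs j) := fun h => hxcn ((mem_cnbr G (xs j) x).2 (Or.inl h))
        have nya : ¬ G.Adj y (xs j) := fun h => hycn ((mem_cnbr G (xs j) y).2 (Or.inr h.symm))
        have dya : y ≠ (xs j) := fun h => hycn ((mem_cnbr G (xs j) y).2 (Or.inl h))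
        have hxu : le x u ∨ le u x := hchain t1 ht1C x hxC u huC hxt1 hut1
        have hyv : le y v ∨ le v y := hchain t2 ht2C y hyC v hvC hyt2 hvt2
        have dxu : x ≠ u := fun h => nxa (h ▸ hadj_ua)
        have dyv : y ≠ v := fun h => nya (h ▸ hadj_va)
        have hadj_xu : G.Adj x u := by
          rcases hxu with h | h
          · exact hadj_of_le hxC huC h dxu
          · exact (hadj_of_le huC hxC h (fun hh => dxu hh.symm)).symm
        have hadj_yv : G.Adj y v := by
          rcases hyv with h | h
          · exact hadj_of_le hyC hvC h dyv
          · exact (hadj_of_le hvC hyC h (fun hh => dyv hh.symm)).symm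
        -- x is incomparable with v (else an induced C4 appears)
        have hnxv : ¬ (le x v ∨ le v x) := by
          rintro (h | h)
          · rcases hxu with h' | h'
            · -- le x u and le x v : induced C4 x-u-a-v
              have dxv : x ≠ v := fun hh => nxa (hh ▸ hadj_va)
              exact noC4 G hch x u (xs j) v hadj_xu hadj_ua hadj_va.symm
                (hadj_of_le hxC hvC h dxv).symm nxa nuv dxa hune
            · exact hnuv (htrans u huC x hxC v hvC h' h)
          · rcases hxu with h' | h'
            · exact hnvu (htrans v hvC x hxC u huC h h')
            · rcases hchain x hxC u huC v hvC h' h with h'' | h''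
              exacts [hnuv h'', hnvu h'']
        have hnyu : ¬ (le y u ∨ le u y) := by
          rintro (h | h)
          · rcases hyv with h' | h'
            · have dyu : y ≠ u := fun hh => nya (hh ▸ hadj_ua)
              exact noC4 G hch y v (xs j) u hadj_yv hadj_va hadj_ua.symm
                (hadj_of_le hyC huC h dyu).symm nya (fun hh => nuv hh.symm) dya
                (fun hh => hune hh.symm)
            · exact hnvu (htrans v hvC y hyC u huC h' h)
          · rcases hyv with h' | h'
            · exact hnuv (htrans u huC y hyC v hvC h h')
            · rcases hchain y hyC v hvC u huC h' h with h'' | h''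
              exacts [hnvu h'', hnuv h'']
        have dxv : x ≠ v := fun h => hnxv (Or.inl (h ▸ hrefl x hxC))
        have dyu : y ≠ u := fun h => hnyu (Or.inl (h ▸ hrefl y hyC))
        have nxv : ¬ G.Adj x v := by
          intro h; exact hnxv (hcomp_of_adj hxC hvC h)
        have nyu : ¬ G.Adj y u := by
          intro h; exact hnyu (hcomp_of_adj hyC huC h)
        have dxy : x ≠ y := by
          rintro rfl
          exact hnxv hyv
        have hnxy : ¬ (le x y ∨ le y x) := by
          rintro (h | h)
          · exact dxy (hxmax y hyZ h).symm
          · exact dxy (hymax x hxZ h)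
        have nxy : ¬ G.Adj x y := by
          intro h; exact hnxy (hcomp_of_adj hxC hyC h)
        -- irredundance consequences
        have hIRb : ∀ c ∈ IR, ∀ d ∈ IR, c ≠ d → ∃ w, w ∈ cnbr G d ∧ w ∉ cnbr G c := by
          intro c hc d hd hne
          by_contra h
          push_neg at h
          have hsub : cnbr G d ⊆ cnbr G c := fun w hw => h w hw
          have hneq : cnbr G d ≠ cnbr G c := hIR.2.2 d hd c hc (fun hh => hne hh.symm)
          exact hIR.2.1 c hc d (Set.ssubset_iff_subset_ne.2 ⟨hsub, hneq⟩)
        -- the y-side extension vertex q1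
        obtain ⟨q1, hq1y, hq1v⟩ := hIRb v (hCIR hvC) y (hCIR hyC) (fun h => dyv h.symm)
        have hadj_yq1 : G.Adj y q1 := by
          rcases (mem_cnbr G y q1).1 hq1y with h | h
          · exact absurd (h ▸ (mem_cnbr G v y).2 (Or.inr hadj_yv.symm)) hq1v
          · exact h
        have dq1v : q1 ≠ v := fun h => hq1v ((mem_cnbr G v q1).2 (Or.inl h))
        have nq1v : ¬ G.Adj q1 v := fun h => hq1v ((mem_cnbr G v q1).2 (Or.inr h.symm))
        have dq1a : q1 ≠ xs j := fun h => nya (by rw [← h]; exact hadj_yq1)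
        have nq1a : ¬ G.Adj q1 (xs j) :=
          fun h => noC4 G hch q1 y v (xs j) hadj_yq1.symm hadj_yv hadj_va h.symm
            nq1v nya dq1v dya
        have dq1u : q1 ≠ u := fun h => nyu (by rw [← h]; exact hadj_yq1)
        have nq1u : ¬ G.Adj q1 u :=
          fun h => noC5 G hch q1 y v (xs j) u hadj_yq1.symm hadj_yv hadj_va hadj_ua.symm h.symm
            nq1v nq1a nya nyu (fun hh => nuv hh.symm)
            dq1v dq1a dya dyu (fun hh => hune hh.symm)
        have dq1x : q1 ≠ x := fun h => nxy (by rw [← h]; exact hadj_yq1.symm)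
        have nq1x : ¬ G.Adj q1 x :=
          fun h => noC6 G hch q1 y v (xs j) u x hadj_yq1.symm hadj_yv hadj_va hadj_ua.symm
            hadj_xu.symm h.symm
            nq1v nq1a nq1u nya nyu (fun hh => nxy hh.symm) (fun hh => nuv hh.symm)
            (fun hh => nxv hh.symm) (fun hh => nxa hh.symm)
            dq1v dq1a dq1u dya dyu (fun hh => dxy hh.symm) (fun hh => hune hh.symm)
            (fun hh => dxv hh.symm) (fun hh => dxa hh.symm)
        -- cleanup for the first x-side extension vertex
        have cleanup1 : ∀ w : V, G.Adj x w → ¬ G.Adj u w → w ≠ u →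
            (¬ G.Adj w (xs j) ∧ w ≠ xs j) ∧ (¬ G.Adj w v ∧ w ≠ v) ∧ (¬ G.Adj w y ∧ w ≠ y) ∧
              (¬ G.Adj w q1 ∧ w ≠ q1) := by
          intro w hwx hwu hwune
          have nwu : ¬ G.Adj w u := fun h => hwu h.symm
          have dwa : w ≠ xs j := fun h => nxa (h ▸ hwx)
          have nwa : ¬ G.Adj w (xs j) :=
            fun h => noC4 G hch w x u (xs j) hwx.symm hadj_xu hadj_ua h.symm
              nwu nxa hwune dxa
          have dwv : w ≠ v := fun h => nxv (h ▸ hwx)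
          have nwv : ¬ G.Adj w v :=
            fun h => noC5 G hch w x u (xs j) v hwx.symm hadj_xu hadj_ua hadj_va.symm h.symm
              nwu nwa nxa nxv nuv
              hwune dwa dxa dxv hune
          have dwy : w ≠ y := fun h => nxy (h ▸ hwx)
          have nwy : ¬ G.Adj w y :=
            fun h => noC6 G hch w x u (xs j) v y hwx.symm hadj_xu hadj_ua hadj_va.symm
              hadj_yv.symm h.symm
              nwu nwa nwv nxa nxv nxy nuv (fun hh => nyu hh.symm) (fun hh => nya hh.symm)
              hwune dwa dwv dxa dxv dxy hune dyu.symm dya.symm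
          have dwq : w ≠ q1 := fun h => nq1x (by rw [← h]; exact hwx.symm)
          have nwq : ¬ G.Adj w q1 :=
            fun h => noC7 G hch w x u (xs j) v y q1 hwx.symm hadj_xu hadj_ua hadj_va.symm
              hadj_yv.symm hadj_yq1 h.symm
              nwu nwa nwv nwy nxa nxv nxy (fun hh => nq1x hh.symm) nuv (fun hh => nyu hh.symm)
              (fun hh => nq1u hh.symm) (fun hh => nya hh.symm) (fun hh => nq1a hh.symm)
              (fun hh => nq1v hh.symm)
              hwune dwa dwv dwy dxa dxv dxy dq1x.symm hune dyu.symm dq1u.symm dya.symm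
              dq1a.symm dq1v.symm
          exact ⟨⟨nwa, dwa⟩, ⟨nwv, dwv⟩, ⟨nwy, dwy⟩, ⟨nwq, dwq⟩⟩
        -- the final induced P8 contradiction, given the two x-side extension vertices
        have finishP8 : ∀ p1 p2 : V, G.Adj x p1 → G.Adj p1 p2 →
            (¬ G.Adj p1 u ∧ p1 ≠ u) → (¬ G.Adj p1 (xs j) ∧ p1 ≠ xs j) →
            (¬ G.Adj p1 v ∧ p1 ≠ v) → (¬ G.Adj p1 y ∧ p1 ≠ y) → (¬ G.Adj p1 q1 ∧ p1 ≠ q1) →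
            (¬ G.Adj p2 x ∧ p2 ≠ x) → (¬ G.Adj p2 u ∧ p2 ≠ u) →
            (¬ G.Adj p2 (xs j) ∧ p2 ≠ xs j) → (¬ G.Adj p2 v ∧ p2 ≠ v) →
            (¬ G.Adj p2 y ∧ p2 ≠ y) → (¬ G.Adj p2 q1 ∧ p2 ≠ q1) → False := by
          intro p1 p2 hxp1 hp1p2 h1u h1a h1v h1y h1q h2x h2u h2a h2v h2y h2q
          exact noP8' G hP8 p2 p1 x u (xs j) v y q1
            hp1p2.symm hxp1.symm hadj_xu hadj_ua hadj_va.symm hadj_yv.symm hadj_yq1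
            h2x.1 h2u.1 h2a.1 h2v.1 h2y.1 h2q.1
            h1u.1 h1a.1 h1v.1 h1y.1 h1q.1
            nxa nxv nxy (fun hh => nq1x hh.symm)
            nuv (fun hh => nyu hh.symm) (fun hh => nq1u hh.symm)
            (fun hh => nya hh.symm) (fun hh => nq1a hh.symm)
            (fun hh => nq1v hh.symm)
            h2x.2 h2u.2 h2a.2 h2v.2 h2y.2 h2q.2
            h1u.2 h1a.2 h1v.2 h1y.2 h1q.2
            dxa dxv dxy dq1x.symm
            hune dyu.symm dq1u.symm
            dya.symm dq1a.symm
            dq1v.symm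
        -- the case where the first extension vertex lands inside C
        have finishC : ∀ w : V, w ∈ C → G.Adj x w → ¬ G.Adj u w → w ≠ u → False := by
          intro w hwC hwx hwu hwune
          have nwu : ¬ G.Adj w u := fun h => hwu h.symm
          obtain ⟨⟨nwa, dwa⟩, ⟨nwv, dwv⟩, ⟨nwy, dwy⟩, ⟨nwq, dwq⟩⟩ := cleanup1 w hwx hwu hwune
          have hlexw : le x w := by
            rcases hcomp_of_adj hxC hwC hwx with h | h
            · exact h
            · exfalso
              rcases hxu with h' | h'
              · exact nwu (hadj_of_le hwC huC (htrans w hwC x hxC u huC h h') hwune)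
              · rcases hchain x hxC w hwC u huC h h' with h'' | h''
                · exact nwu (hadj_of_le hwC huC h'' hwune)
                · exact hwu (hadj_of_le huC hwC h'' (fun hh => hwune hh.symm))
          obtain ⟨w2, hw2w, hw2x⟩ := hIRb x (hCIR hxC) w (hCIR hwC) hwx.ne
          have hadjww2 : G.Adj w w2 := by
            rcases (mem_cnbr G w w2).1 hw2w with h | h
            · exact absurd (h ▸ (mem_cnbr G x w).2 (Or.inr hwx)) hw2x
            · exact h
          have dw2x : w2 ≠ x := fun h => hw2x ((mem_cnbr G x w2).2 (Or.inl h))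
          have nw2x : ¬ G.Adj w2 x := fun h => hw2x ((mem_cnbr G x w2).2 (Or.inr h.symm))
          have hw2nC : w2 ∉ C := by
            intro hw2C
            rcases hcomp_of_adj hwC hw2C hadjww2 with h | h
            · exact nw2x (hadj_of_le hxC hw2C (htrans x hxC w hwC w2 hw2C hlexw h)
                dw2x.symm).symm
            · rcases hchain w hwC w2 hw2C x hxC h hlexw with h' | h'
              · exact nw2x (hadj_of_le hw2C hxC h' dw2x)
              · exact nw2x (hadj_of_le hxC hw2C h' dw2x.symm).symm
          have dw2u : w2 ≠ u := fun h => hw2nC (h ▸ huC)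
          have dw2v : w2 ≠ v := fun h => hw2nC (h ▸ hvC)
          have dw2y : w2 ≠ y := fun h => hw2nC (h ▸ hyC)
          have dw2a : w2 ≠ xs j := fun h => nwa (h ▸ hadjww2)
          have nw2u : ¬ G.Adj w2 u :=
            fun h => noC4 G hch w2 w x u hadjww2.symm hwx.symm hadj_xu h.symm
              nw2x nwu dw2x hwune
          have nw2a : ¬ G.Adj w2 (xs j) :=
            fun h => noC5 G hch w2 w x u (xs j) hadjww2.symm hwx.symm hadj_xu hadj_ua h.symm
              nw2x nw2u nwu nwa nxa
              dw2x dw2u hwune dwa dxa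
          have nw2v : ¬ G.Adj w2 v :=
            fun h => noC6 G hch w2 w x u (xs j) v hadjww2.symm hwx.symm hadj_xu hadj_ua
              hadj_va.symm h.symm
              nw2x nw2u nw2a nwu nwa nwv nxa nxv nuv
              dw2x dw2u dw2a hwune dwa dwv dxa dxv hune
          have nw2y : ¬ G.Adj w2 y :=
            fun h => noC7 G hch w2 w x u (xs j) v y hadjww2.symm hwx.symm hadj_xu hadj_ua
              hadj_va.symm hadj_yv.symm h.symm
              nw2x nw2u nw2a nw2v nwu nwa nwv nwy nxa nxv nxy nuv
              (fun hh => nyu hh.symm) (fun hh => nya hh.symm)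
              dw2x dw2u dw2a dw2v hwune dwa dwv dwy dxa dxv dxy hune dyu.symm dya.symm
          have dw2q : w2 ≠ q1 := fun h => nw2y (h ▸ hadj_yq1.symm)
          have nw2q : ¬ G.Adj w2 q1 :=
            fun h => noC8 G hch w2 w x u (xs j) v y q1 hadjww2.symm hwx.symm hadj_xu hadj_ua
              hadj_va.symm hadj_yv.symm hadj_yq1 h.symm
              nw2x nw2u nw2a nw2v nw2y
              nwu nwa nwv nwy nwq
              nxa nxv nxy (fun hh => nq1x hh.symm)
              nuv (fun hh => nyu hh.symm) (fun hh => nq1u hh.symm)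
              (fun hh => nya hh.symm) (fun hh => nq1a hh.symm)
              (fun hh => nq1v hh.symm)
              dw2x dw2u dw2a dw2v dw2y
              hwune dwa dwv dwy dwq
              dxa dxv dxy dq1x.symm
              hune dyu.symm dq1u.symm
              dya.symm dq1a.symm
              dq1v.symm
          exact finishP8 w w2 hwx hadjww2 ⟨nwu, hwune⟩ ⟨nwa, dwa⟩ ⟨nwv, dwv⟩ ⟨nwy, dwy⟩
            ⟨nwq, dwq⟩ ⟨nw2x, dw2x⟩ ⟨nw2u, dw2u⟩ ⟨nw2a, dw2a⟩ ⟨nw2v, dw2v⟩ ⟨nw2y, dw2y⟩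
            ⟨nw2q, dw2q⟩
        -- obtain the first x-side extension vertex w1
        obtain ⟨w1, hw1x, hw1u⟩ := hIRb u (hCIR huC) x (hCIR hxC) (fun h => dxu h.symm)
        have hadj_xw1 : G.Adj x w1 := by
          rcases (mem_cnbr G x w1).1 hw1x with h | h
          · exact absurd (h ▸ (mem_cnbr G u x).2 (Or.inr hadj_xu.symm)) hw1u
          · exact h
        have dw1u : w1 ≠ u := fun h => hw1u ((mem_cnbr G u w1).2 (Or.inl h))
        have nw1u : ¬ G.Adj u w1 := fun h => hw1u ((mem_cnbr G u w1).2 (Or.inr h))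
        by_cases hw1IR : w1 ∈ IR
        · exact finishC w1 (hclos x hxC w1 hw1IR hadj_xw1) hadj_xw1 nw1u dw1u
        · obtain ⟨i, hiIR, hicn⟩ := hIR.1 w1
          have hiw1ne : i ≠ w1 := fun h => hw1IR (h ▸ hiIR)
          have hadj_w1i : G.Adj w1 i := by
            rcases (mem_cnbr G w1 i).1 (hicn ((mem_cnbr G i i).2 (Or.inl rfl))) with h | h
            · exact absurd h hiw1ne
            · exact h
          have hnu_w1 : u ∉ cnbr G w1 := fun h => hw1u ((cnbr_comm G w1 u).1 h)
          have hnotu_i : u ∉ cnbr G i := fun h => hnu_w1 (hicn h)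
          by_cases hicx : i ∈ cnbr G x
          · have hine_x : i ≠ x := by
              rintro rfl
              exact hnotu_i ((mem_cnbr G i u).2 (Or.inr hadj_xu))
            have hadj_xi : G.Adj x i := by
              rcases (mem_cnbr G x i).1 hicx with h | h
              · exact absurd h hine_x
              · exact h
            have hiC : i ∈ C := hclos x hxC i hiIR hadj_xi
            have hnadj_ui : ¬ G.Adj u i := fun h => hnotu_i ((mem_cnbr G i u).2 (Or.inr h.symm))
            have hdiu : i ≠ u := fun h => hnotu_i ((mem_cnbr G i u).2 (Or.inl h.symm))
            exact finishC i hiC hadj_xi hnadj_ui hdiu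
          · -- both extension vertices are outside IR ; conclude directly
            obtain ⟨⟨nwa, dwa⟩, ⟨nwv, dwv⟩, ⟨nwy, dwy⟩, ⟨nwq, dwq⟩⟩ :=
              cleanup1 w1 hadj_xw1 nw1u dw1u
            have nw1u' : ¬ G.Adj w1 u := fun h => nw1u h.symm
            have hna_w1 : xs j ∉ cnbr G w1 := by
              rw [mem_cnbr]
              rintro (h | h)
              · exact dwa h.symm
              · exact nwa h
            have hnv_w1 : v ∉ cnbr G w1 := by
              rw [mem_cnbr]
              rintro (h | h)
              · exact dwv h.symm
              · exact nwv h
            have hny_w1 : y ∉ cnbr G w1 := by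
              rw [mem_cnbr]
              rintro (h | h)
              · exact dwy h.symm
              · exact nwy h
            have hnq_w1 : q1 ∉ cnbr G w1 := by
              rw [mem_cnbr]
              rintro (h | h)
              · exact dwq h.symm
              · exact nwq h
            have h2x : ¬ G.Adj i x ∧ i ≠ x :=
              ⟨fun h => hicx ((mem_cnbr G x i).2 (Or.inr h.symm)),
               fun h => hicx ((mem_cnbr G x i).2 (Or.inl h))⟩
            have h2u : ¬ G.Adj i u ∧ i ≠ u :=
              ⟨fun h => hnotu_i ((mem_cnbr G i u).2 (Or.inr h)),
               fun h => hnotu_i ((mem_cnbr G i u).2 (Or.inl h.symm))⟩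
            have h2a : ¬ G.Adj i (xs j) ∧ i ≠ xs j :=
              ⟨fun h => hna_w1 (hicn ((mem_cnbr G i (xs j)).2 (Or.inr h))),
               fun h => hna_w1 (hicn ((mem_cnbr G i (xs j)).2 (Or.inl h.symm)))⟩
            have h2v : ¬ G.Adj i v ∧ i ≠ v :=
              ⟨fun h => hnv_w1 (hicn ((mem_cnbr G i v).2 (Or.inr h))),
               fun h => hnv_w1 (hicn ((mem_cnbr G i v).2 (Or.inl h.symm)))⟩
            have h2y : ¬ G.Adj i y ∧ i ≠ y :=
              ⟨fun h => hny_w1 (hicn ((mem_cnbr G i y).2 (Or.inr h))),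
               fun h => hny_w1 (hicn ((mem_cnbr G i y).2 (Or.inl h.symm)))⟩
            have h2q : ¬ G.Adj i q1 ∧ i ≠ q1 :=
              ⟨fun h => hnq_w1 (hicn ((mem_cnbr G i q1).2 (Or.inr h))),
               fun h => hnq_w1 (hicn ((mem_cnbr G i q1).2 (Or.inl h.symm)))⟩
            exact finishP8 w1 i hadj_xw1 hadj_w1i ⟨nw1u', dw1u⟩ ⟨nwa, dwa⟩ ⟨nwv, dwv⟩
              ⟨nwy, dwy⟩ ⟨nwq, dwq⟩ h2x h2u h2a h2v h2y h2q
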